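/- Let G and H be connected graphs on n and m vertices with positive Laplacian eigenvalues λ_1,...,λ_{n-1} and μ_1,...,μ_{m-1} and orthonormal eigenvectors Ψ_k, Φ_k respectively. In the join G+H, for u,v ∈ V(G): R_{G+H}[u,v] = Σ_{k=1}^{n-1} (Ψ_{ku} − Ψ_{kv})²/(λ_k + m); and for u ∈ V(G), w ∈ V(H): R_{G+H}[u,w] = Σ_{k=1}^{n-1} Ψ_{ku}²/(λ_k + m) + Σ_{k=1}^{m-1} Φ_{kw}²/(μ_k + n) + 1/(nm). -/

import Mathlib

open Matrix Finset

open Classical in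
/-- The Moore–Penrose pseudoinverse of a real square matrix, defined via the
four Penrose conditions (it is unique when it exists). -/
noncomputable def Matrix.mpinv {m : Type*} [Fintype m] [DecidableEq m]
    (A : Matrix m m ℝ) : Matrix m m ℝ :=
  if h : ∃ B : Matrix m m ℝ,
      A * B * A = A ∧ B * A * B = B ∧ (A * B)ᵀ = A * B ∧ (B * A)ᵀ = B * A
  then h.choose else 0

/-- Effective resistance between `u` and `v` with respect to a (weighted)
Laplacian matrix `L`:  `(e_u - e_v)ᵀ L⁺ (e_u - e_v)`. -/
noncomputable def effRes {m : Type*} [Fintype m] [DecidableEq m]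
    (L : Matrix m m ℝ) (u v : m) : ℝ :=
  (Pi.single u 1 - Pi.single v 1) ⬝ᵥ (L.mpinv *ᵥ (Pi.single u 1 - Pi.single v 1))

/-- The (real) Laplacian matrix of a simple graph. -/
noncomputable def lapm {V : Type*} [Fintype V] [DecidableEq V]
    (G : SimpleGraph V) : Matrix V V ℝ :=
  letI := Classical.decRel G.Adj
  G.lapMatrix ℝ

/-- Resistance distance between two vertices of a simple graph. -/
noncomputable def resDist {V : Type*} [Fintype V] [DecidableEq V]
    (G : SimpleGraph V) (u v : V) : ℝ :=
  effRes (lapm G) u v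

/-- Resistance diameter of a simple graph. -/
noncomputable def resDiam {V : Type*} [Fintype V] [DecidableEq V]
    (G : SimpleGraph V) : ℝ :=
  ⨆ p : V × V, resDist G p.1 p.2

/-- The weighted Laplacian of the cone over `G` with apex `Sum.inr ()`:
edges of `G` have conductance `1` (unit resistance), and each vertex of `G`
is joined to the apex by an edge of conductance `m` (resistance `1/m`). -/
noncomputable def coneLap {V : Type*} [Fintype V] [DecidableEq V]
    (G : SimpleGraph V) (m : ℝ) : Matrix (V ⊕ Unit) (V ⊕ Unit) ℝ :=
  letI := Classical.decRel G.Adj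
  let W : Matrix (V ⊕ Unit) (V ⊕ Unit) ℝ := fun i j =>
    match i, j with
    | Sum.inl a, Sum.inl b => if G.Adj a b then 1 else 0
    | Sum.inl _, Sum.inr _ => m
    | Sum.inr _, Sum.inl _ => m
    | Sum.inr _, Sum.inr _ => 0
  Matrix.of fun i j => (if i = j then ∑ k, W i k else 0) - W i j

/-- The `k`-dimensional hypercube graph `Q_k`. -/
def hypercube (k : ℕ) : SimpleGraph (Fin k → Bool) where
  Adj x y := (Finset.univ.filter fun i => x i ≠ y i).card = 1
  symm := by
    constructor
    intro x y h
    rw [← h]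
    congr 1
    ext i
    simp [ne_comm]
  loopless := by constructor; intro x; simp

/-- The join `G + H` of two graphs on disjoint vertex sets. -/
def graphJoin {V W : Type*} (G : SimpleGraph V) (H : SimpleGraph W) :
    SimpleGraph (V ⊕ W) where
  Adj x y :=
    match x, y with
    | Sum.inl a, Sum.inl b => G.Adj a b
    | Sum.inr a, Sum.inr b => H.Adj a b
    | Sum.inl _, Sum.inr _ => True
    | Sum.inr _, Sum.inl _ => True
  symm := by
    constructor
    rintro (a | a) (b | b) h
    · exact G.adj_symm h
    · trivial
    · trivial
    · exact H.adj_symm h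
  loopless := by
    constructor
    rintro (a | a) h
    · exact G.irrefl h
    · exact H.irrefl h

section aux
set_option linter.unusedSectionVars false

lemma mpinv_eq {m : Type*} [Fintype m] [DecidableEq m] (A B : Matrix m m ℝ)
    (h1 : A * B * A = A) (h2 : B * A * B = B) (h3 : (A * B)ᵀ = A * B)
    (h4 : (B * A)ᵀ = B * A) : A.mpinv = B := by
  have hex : ∃ C : Matrix m m ℝ,
      A * C * A = A ∧ C * A * C = C ∧ (A * C)ᵀ = A * C ∧ (C * A)ᵀ = C * A :=
    ⟨B, h1, h2, h3, h4⟩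
  rw [Matrix.mpinv, dif_pos hex]
  obtain ⟨k1, k2, k3, k4⟩ := hex.choose_spec
  set C := hex.choose with hC
  -- A * B = A * C
  have hAB : A * B = A * C := by
    calc A * B = (A * B)ᵀ := h3.symm
      _ = Bᵀ * Aᵀ := transpose_mul _ _
      _ = Bᵀ * (A * C * A)ᵀ := by rw [k1]
      _ = Bᵀ * (Aᵀ * (A * C)ᵀ) := by rw [transpose_mul (A * C) A]
      _ = (Bᵀ * Aᵀ) * (A * C)ᵀ := (Matrix.mul_assoc _ _ _).symm
      _ = (A * B)ᵀ * (A * C)ᵀ := by rw [← transpose_mul A B]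
      _ = (A * B) * (A * C) := by rw [h3, k3]
      _ = (A * B * A) * C := by simp only [Matrix.mul_assoc]
      _ = A * C := by rw [h1]
  have hBA : B * A = C * A := by
    calc B * A = (B * A)ᵀ := h4.symm
      _ = Aᵀ * Bᵀ := transpose_mul _ _
      _ = (A * (C * A))ᵀ * Bᵀ := by rw [← Matrix.mul_assoc, k1]
      _ = ((C * A)ᵀ * Aᵀ) * Bᵀ := by rw [transpose_mul A (C * A)]
      _ = (C * A)ᵀ * (Aᵀ * Bᵀ) := Matrix.mul_assoc _ _ _
      _ = (C * A) * (B * A)ᵀ := by rw [k4, ← transpose_mul B A]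
      _ = (C * A) * (B * A) := by rw [h4]
      _ = C * (A * B * A) := by simp only [Matrix.mul_assoc]
      _ = C * A := by rw [h1]
  calc C = C * A * C := k2.symm
    _ = C * (A * C) := by rw [Matrix.mul_assoc]
    _ = C * (A * B) := by rw [hAB]
    _ = (C * A) * B := by rw [Matrix.mul_assoc]
    _ = (B * A) * B := by rw [hBA]
    _ = B := h2

lemma vecMulVec_mul_vecMulVec {ι : Type*} [Fintype ι] (a b c d : ι → ℝ) :
    vecMulVec a b * vecMulVec c d = (b ⬝ᵥ c) • vecMulVec a d := by
  ext i j
  simp only [mul_apply, vecMulVec_apply, dotProduct, Matrix.smul_apply, smul_eq_mul, Finset.sum_mul]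
  exact Finset.sum_congr rfl fun k _ => by ring

lemma transpose_vecMulVec {ι : Type*} (a b : ι → ℝ) :
    (vecMulVec a b)ᵀ = vecMulVec b a := by
  ext i j; simp [vecMulVec_apply, mul_comm]

section penrose
variable {ι V : Type*} [Fintype ι] [DecidableEq ι] [Fintype V] [DecidableEq V]

lemma sum_smul_vmv_mul (w : ι → V → ℝ) (g : ι → ℝ)
    (horth : ∀ t t', w t ⬝ᵥ w t' = if t = t' then g t else 0) (c d : ι → ℝ) :
    (∑ t, c t • vecMulVec (w t) (w t)) * (∑ t, d t • vecMulVec (w t) (w t))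
      = ∑ t, (c t * d t * g t) • vecMulVec (w t) (w t) := by
  rw [Finset.sum_mul]
  refine Finset.sum_congr rfl fun t _ => ?_
  rw [Finset.mul_sum]
  have : ∀ s ∈ (univ : Finset ι),
      (c t • vecMulVec (w t) (w t)) * (d s • vecMulVec (w s) (w s))
        = if s = t then (c t * d t * g t) • vecMulVec (w t) (w t) else 0 := by
    intro s _
    rw [Matrix.smul_mul, Matrix.mul_smul, _root_.vecMulVec_mul_vecMulVec, horth]
    by_cases h : s = t
    · subst h; simp [smul_smul]; ring_nf
    · simp [Ne.symm h, h]
  rw [Finset.sum_congr rfl this, Finset.sum_ite_eq' univ t]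
  simp

lemma mpinv_sum_smul_vmv (w : ι → V → ℝ) (g c : ι → ℝ)
    (horth : ∀ t t', w t ⬝ᵥ w t' = if t = t' then g t else 0)
    (hg : ∀ t, g t ≠ 0) (hc : ∀ t, c t ≠ 0) :
    Matrix.mpinv (∑ t, c t • vecMulVec (w t) (w t))
      = ∑ t, (c t * g t ^ 2)⁻¹ • vecMulVec (w t) (w t) := by
  set A := ∑ t, c t • vecMulVec (w t) (w t) with hA
  set B := ∑ t, (fun t => (c t * g t ^ 2)⁻¹) t • vecMulVec (w t) (w t) with hB
  have hmul := sum_smul_vmv_mul w g horth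
  have hABc : ∀ t, c t * (c t * g t ^ 2)⁻¹ * g t = (g t)⁻¹ := fun t => by
    rw [mul_inv, sq, mul_inv,
      show c t * ((c t)⁻¹ * ((g t)⁻¹ * (g t)⁻¹)) * g t
        = (c t * (c t)⁻¹) * ((g t * (g t)⁻¹) * (g t)⁻¹) from by ring,
      mul_inv_cancel₀ (hc t), mul_inv_cancel₀ (hg t), one_mul, one_mul]
  have hBAc : ∀ t, (c t * g t ^ 2)⁻¹ * c t * g t = (g t)⁻¹ := fun t => by
    rw [mul_inv, sq, mul_inv,
      show (c t)⁻¹ * ((g t)⁻¹ * (g t)⁻¹) * c t * g t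
        = (c t * (c t)⁻¹) * ((g t * (g t)⁻¹) * (g t)⁻¹) from by ring,
      mul_inv_cancel₀ (hc t), mul_inv_cancel₀ (hg t), one_mul, one_mul]
  have hAB : A * B = ∑ t, (g t)⁻¹ • vecMulVec (w t) (w t) := by
    rw [hA, hB, hmul]; exact Finset.sum_congr rfl fun t _ => by rw [hABc]
  have hBA : B * A = ∑ t, (g t)⁻¹ • vecMulVec (w t) (w t) := by
    rw [hA, hB, hmul]; exact Finset.sum_congr rfl fun t _ => by rw [hBAc]
  have hsymm : (∑ t, (g t)⁻¹ • vecMulVec (w t) (w t))ᵀ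
      = ∑ t, (g t)⁻¹ • vecMulVec (w t) (w t) := by
    rw [transpose_sum]
    exact Finset.sum_congr rfl fun t _ => by rw [transpose_smul, transpose_vecMulVec]
  apply mpinv_eq
  · rw [hAB, hA, hmul]
    exact Finset.sum_congr rfl fun t _ => by
      rw [show (g t)⁻¹ * c t * g t = c t * (g t * (g t)⁻¹) from by ring,
        mul_inv_cancel₀ (hg t), mul_one]
  · rw [hBA]
    nth_rewrite 2 [hB]
    rw [hmul]
    exact Finset.sum_congr rfl fun t _ => by
      show _ = (c t * g t ^ 2)⁻¹ • _
      rw [show (g t)⁻¹ * (c t * g t ^ 2)⁻¹ * g t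
          = (c t * g t ^ 2)⁻¹ * (g t * (g t)⁻¹) from by ring,
        mul_inv_cancel₀ (hg t), mul_one]
  · rw [hAB, hsymm]
  · rw [hBA, hsymm]

end penrose

lemma lapm_isSymm {V : Type*} [Fintype V] [DecidableEq V] (G : SimpleGraph V) :
    (lapm G).IsSymm := by
  letI := Classical.decRel G.Adj
  exact SimpleGraph.isSymm_lapMatrix ℝ G

lemma lapm_mulVec_one {V : Type*} [Fintype V] [DecidableEq V] (G : SimpleGraph V) :
    lapm G *ᵥ (fun _ => 1) = 0 := by
  letI := Classical.decRel G.Adj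
  exact SimpleGraph.lapMatrix_mulVec_const_eq_zero G

lemma lapm_row_sum {V : Type*} [Fintype V] [DecidableEq V] (G : SimpleGraph V) (a : V) :
    ∑ b, lapm G a b = 0 := by
  have := congrFun (lapm_mulVec_one G) a
  simpa [mulVec, dotProduct] using this

lemma lapm_col_sum {V : Type*} [Fintype V] [DecidableEq V] (G : SimpleGraph V) (b : V) :
    ∑ a, lapm G a b = 0 := by
  have h : ∀ a, lapm G a b = lapm G b a := fun a => by
    conv_lhs => rw [← (lapm_isSymm G)]
    rfl
  simp_rw [h]
  exact lapm_row_sum G b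

section spec
variable {n : ℕ}

lemma psi_sum_zero (G : SimpleGraph (Fin n)) (lam : Fin (n-1) → ℝ)
    (Psi : Fin (n-1) → Fin n → ℝ) (hlam : ∀ k, 0 < lam k)
    (hPsi : ∀ k, lapm G *ᵥ Psi k = lam k • Psi k) (k : Fin (n-1)) :
    ∑ a, Psi k a = 0 := by
  have h : lam k * ∑ a, Psi k a = 0 := by
    calc lam k * ∑ a, Psi k a = ∑ a, (lam k • Psi k) a := by
          simp [Finset.mul_sum]
      _ = ∑ a, (lapm G *ᵥ Psi k) a := by rw [hPsi k]
      _ = ∑ a, ∑ b, lapm G a b * Psi k b := by simp [mulVec, dotProduct]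
      _ = ∑ b, (∑ a, lapm G a b) * Psi k b := by
          rw [Finset.sum_comm]; simp [Finset.sum_mul]
      _ = 0 := by simp [lapm_col_sum]
  exact (mul_eq_zero.mp h).resolve_left (ne_of_gt (hlam k))

lemma psi_complete (hn : 0 < n) (Psi : Fin (n-1) → Fin n → ℝ)
    (hOrth : ∀ k k', Psi k ⬝ᵥ Psi k' = if k = k' then 1 else 0)
    (hsum : ∀ k, ∑ a, Psi k a = 0) (a b : Fin n) :
    ∑ k, Psi k a * Psi k b = (if a = b then 1 else 0) - 1/n := by
  have hcard : Fintype.card (Fin (n-1) ⊕ Unit) = Fintype.card (Fin n) := by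
    simp; omega
  have e : Fin (n-1) ⊕ Unit ≃ Fin n := Fintype.equivOfCardEq hcard
  have hnR : (n : ℝ) ≠ 0 := Nat.cast_ne_zero.mpr hn.ne'
  set M : Matrix (Fin (n-1) ⊕ Unit) (Fin n) ℝ :=
    fun s j => Sum.elim (fun k => Psi k j) (fun _ => (Real.sqrt n)⁻¹) s with hM
  have hs : (Real.sqrt n)⁻¹ * (Real.sqrt n)⁻¹ = 1/n := by
    rw [← mul_inv, Real.mul_self_sqrt (by positivity), one_div]
  have h1 : M * Mᵀ = 1 := by
    ext s s'
    rcases s with k | u <;> rcases s' with k' | u'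
    · have := hOrth k k'
      simp only [dotProduct] at this
      rw [mul_apply]; simp only [transpose_apply]
      simp [hM, mul_apply, one_apply, this, Sum.inl.injEq]
    · rw [mul_apply]; simp only [transpose_apply]
      simp [hM, mul_apply, one_apply, ← Finset.sum_mul, hsum]
    · rw [mul_apply]; simp only [transpose_apply]
      simp only [hM, mul_apply, one_apply, transpose_apply, Sum.elim_inl, Sum.elim_inr]
      rw [← Finset.mul_sum, hsum, mul_zero]
      simp
    · rw [mul_apply]; simp only [transpose_apply]
      simp [hM, mul_apply, one_apply, hs, Finset.sum_const, card_univ]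
      exact mul_inv_cancel₀ hnR
  have h2 : Mᵀ * M = 1 := (mul_eq_one_comm_of_equiv e).mp h1
  have h3 := congrFun (congrFun h2 a) b
  rw [mul_apply] at h3
  rw [Fintype.sum_sum_type] at h3
  simp only [transpose_apply] at h3
  simp only [hM, Sum.elim_inl, Sum.elim_inr] at h3
  rw [Finset.sum_const] at h3
  simp only [one_apply, card_univ, Fintype.card_unit, one_smul, hs] at h3
  linarith
end spec

lemma lapm_spectral (hn : 0 < n) (G : SimpleGraph (Fin n)) (lam : Fin (n-1) → ℝ)
    (Psi : Fin (n-1) → Fin n → ℝ) (hlam : ∀ k, 0 < lam k)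
    (hPsi : ∀ k, lapm G *ᵥ Psi k = lam k • Psi k)
    (hOrth : ∀ k k', Psi k ⬝ᵥ Psi k' = if k = k' then 1 else 0) (a b : Fin n) :
    lapm G a b = ∑ k, lam k * (Psi k a * Psi k b) := by
  have hsum := psi_sum_zero G lam Psi hlam hPsi
  have hcomp := psi_complete hn Psi hOrth hsum
  have hrow : ∀ k, ∑ c, lapm G a c * Psi k c = lam k * Psi k a := by
    intro k
    have := congrFun (hPsi k) a
    simpa [mulVec, dotProduct] using this
  calc lapm G a b = ∑ c, lapm G a c * (if c = b then (1:ℝ) else 0) := by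
        simp [mul_ite, mul_one, mul_zero, Finset.sum_ite_eq']
    _ = ∑ c, lapm G a c * ((∑ k, Psi k c * Psi k b) + 1/n) := by
        refine Finset.sum_congr rfl fun c _ => ?_
        rw [hcomp c b]; ring
    _ = (∑ c, ∑ k, lapm G a c * (Psi k c * Psi k b)) + (∑ c, lapm G a c) * (1/n) := by
        simp_rw [mul_add, Finset.sum_add_distrib, Finset.mul_sum, Finset.sum_mul]
    _ = ∑ k, lam k * (Psi k a * Psi k b) := by
        rw [lapm_row_sum, zero_mul, add_zero, Finset.sum_comm]
        refine Finset.sum_congr rfl fun k _ => ?_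
        rw [show ∑ c, lapm G a c * (Psi k c * Psi k b)
            = (∑ c, lapm G a c * Psi k c) * Psi k b from by
          rw [Finset.sum_mul]; exact Finset.sum_congr rfl fun c _ => by ring, hrow k]
        ring

section joinlap
variable {n m : ℕ} (G : SimpleGraph (Fin n)) (H : SimpleGraph (Fin m))

lemma join_adj_ll (a b : Fin n) : (graphJoin G H).Adj (Sum.inl a) (Sum.inl b) ↔ G.Adj a b :=
  Iff.rfl
lemma join_adj_lr (a : Fin n) (w : Fin m) :
    (graphJoin G H).Adj (Sum.inl a) (Sum.inr w) := trivial
lemma join_adj_rl (w : Fin m) (a : Fin n) :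
    (graphJoin G H).Adj (Sum.inr w) (Sum.inl a) := trivial
lemma join_adj_rr (w w' : Fin m) :
    (graphJoin G H).Adj (Sum.inr w) (Sum.inr w') ↔ H.Adj w w' := Iff.rfl

lemma lapm_eq_lapMatrix {V : Type*} [Fintype V] [DecidableEq V] (G : SimpleGraph V)
    [inst : DecidableRel G.Adj] : lapm G = G.lapMatrix ℝ := by
  unfold lapm
  rw [Subsingleton.elim (Classical.decRel G.Adj) inst]

lemma lapm_apply_eq {V : Type*} [Fintype V] [DecidableEq V] (G : SimpleGraph V)
    [DecidableRel G.Adj] (i j : V) :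
    lapm G i j = (if i = j then ∑ c, (if G.Adj i c then (1:ℝ) else 0) else 0)
      - (if G.Adj i j then 1 else 0) := by
  rw [lapm_eq_lapMatrix, SimpleGraph.lapMatrix]
  simp only [Matrix.sub_apply, SimpleGraph.degMatrix, Matrix.diagonal_apply,
    SimpleGraph.adjMatrix_apply]
  congr 1
  split
  · rw [SimpleGraph.degree_eq_sum_if_adj]
  · rfl

lemma lapm_join_ll (a b : Fin n) :
    lapm (graphJoin G H) (Sum.inl a) (Sum.inl b)
      = lapm G a b + if a = b then (m:ℝ) else 0 := by
  letI : DecidableRel (graphJoin G H).Adj := Classical.decRel _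
  letI : DecidableRel G.Adj := Classical.decRel _
  rw [lapm_apply_eq, lapm_apply_eq]
  rw [Fintype.sum_sum_type]
  simp only [join_adj_ll, Sum.inl.injEq]
  have h2 : ∀ w : Fin m, (if (graphJoin G H).Adj (Sum.inl a) (Sum.inr w) then (1:ℝ) else 0) = 1 :=
    fun w => if_pos (join_adj_lr G H a w)
  rw [Finset.sum_congr rfl (fun w _ => h2 w), Finset.sum_const, card_univ, Fintype.card_fin,
    nsmul_eq_mul, mul_one]
  split <;> ring

lemma lapm_join_lr (a : Fin n) (w : Fin m) :
    lapm (graphJoin G H) (Sum.inl a) (Sum.inr w) = -1 := by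
  letI : DecidableRel (graphJoin G H).Adj := Classical.decRel _
  rw [lapm_apply_eq]
  rw [if_neg (by simp), if_pos (join_adj_lr G H a w)]
  ring

lemma lapm_join_rl (w : Fin m) (a : Fin n) :
    lapm (graphJoin G H) (Sum.inr w) (Sum.inl a) = -1 := by
  letI : DecidableRel (graphJoin G H).Adj := Classical.decRel _
  rw [lapm_apply_eq]
  rw [if_neg (by simp), if_pos (join_adj_rl G H w a)]
  ring

lemma lapm_join_rr (w w' : Fin m) :
    lapm (graphJoin G H) (Sum.inr w) (Sum.inr w')
      = lapm H w w' + if w = w' then (n:ℝ) else 0 := by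
  letI : DecidableRel (graphJoin G H).Adj := Classical.decRel _
  letI : DecidableRel H.Adj := Classical.decRel _
  rw [lapm_apply_eq, lapm_apply_eq]
  rw [Fintype.sum_sum_type]
  simp only [join_adj_rr, Sum.inr.injEq]
  have h2 : ∀ a : Fin n, (if (graphJoin G H).Adj (Sum.inr w) (Sum.inl a) then (1:ℝ) else 0) = 1 :=
    fun a => if_pos (join_adj_rl G H w a)
  rw [Finset.sum_congr rfl (fun a _ => h2 a), Finset.sum_const, card_univ, Fintype.card_fin,
    nsmul_eq_mul, mul_one]
  split <;> ring

end joinlap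


lemma dot_mulVec_sum_vmv {ι V : Type*} [Fintype ι] [Fintype V]
    (w : ι → V → ℝ) (d : ι → ℝ) (x : V → ℝ) :
    x ⬝ᵥ ((∑ t, d t • vecMulVec (w t) (w t)) *ᵥ x) = ∑ t, d t * (w t ⬝ᵥ x)^2 := by
  have h1 : (∑ t : ι, d t • vecMulVec (w t) (w t)) *ᵥ x
      = ∑ t, (d t * (w t ⬝ᵥ x)) • w t := by
    ext i
    simp only [mulVec, dotProduct, Matrix.sum_apply, Matrix.smul_apply, vecMulVec_apply,
      smul_eq_mul, Finset.sum_apply, Pi.smul_apply, Finset.sum_mul]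
    rw [Finset.sum_comm]
    refine Finset.sum_congr rfl fun t _ => ?_
    rw [Finset.mul_sum, Finset.sum_mul]
    exact Finset.sum_congr rfl fun j _ => by ring
  have key : ∀ (y : ι → ℝ), x ⬝ᵥ (∑ t, y t • w t) = ∑ t, y t * (w t ⬝ᵥ x) := by
    intro y
    simp only [dotProduct, Finset.sum_apply, Pi.smul_apply, smul_eq_mul, Finset.mul_sum]
    rw [Finset.sum_comm]
    refine Finset.sum_congr rfl fun t _ => ?_
    exact Finset.sum_congr rfl fun i _ => by ring
  rw [h1, key]
  exact Finset.sum_congr rfl fun t _ => by rw [sq]; ring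

lemma dot_single_sub {V : Type*} [Fintype V] [DecidableEq V] (a : V → ℝ) (u v : V) :
    a ⬝ᵥ (Pi.single u 1 - Pi.single v 1) = a u - a v := by
  rw [dotProduct_sub, dotProduct_single, dotProduct_single, mul_one, mul_one]

end aux

/-- Resistance distances in the join `G + H` in terms of spectral data of the factors. -/
theorem resDist_join (n m : ℕ) (hn : 0 < n) (hm : 0 < m)
    (G : SimpleGraph (Fin n)) (H : SimpleGraph (Fin m))
    (hG : G.Connected) (hH : H.Connected)
    (lam : Fin (n - 1) → ℝ) (mu : Fin (m - 1) → ℝ)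
    (Psi : Fin (n - 1) → Fin n → ℝ) (Phi : Fin (m - 1) → Fin m → ℝ)
    (hlam : ∀ k, 0 < lam k) (hmu : ∀ k, 0 < mu k)
    (hPsi : ∀ k, lapm G *ᵥ Psi k = lam k • Psi k)
    (hPhi : ∀ k, lapm H *ᵥ Phi k = mu k • Phi k)
    (hPsiOrth : ∀ k k', Psi k ⬝ᵥ Psi k' = if k = k' then 1 else 0)
    (hPhiOrth : ∀ k k', Phi k ⬝ᵥ Phi k' = if k = k' then 1 else 0) :
    (∀ u v : Fin n,
      resDist (graphJoin G H) (Sum.inl u) (Sum.inl v)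
        = ∑ k : Fin (n - 1), (Psi k u - Psi k v) ^ 2 / (lam k + m)) ∧
    (∀ (u : Fin n) (w : Fin m),
      resDist (graphJoin G H) (Sum.inl u) (Sum.inr w)
        = ∑ k : Fin (n - 1), (Psi k u) ^ 2 / (lam k + m)
          + ∑ k : Fin (m - 1), (Phi k w) ^ 2 / (mu k + n) + 1 / (n * m)) := by
  classical
  have hnne : ((n:ℝ)) ≠ 0 := Nat.cast_ne_zero.mpr hn.ne'
  have hmne : ((m:ℝ)) ≠ 0 := Nat.cast_ne_zero.mpr hm.ne'
  have hnmne : ((n:ℝ)) + m ≠ 0 := by positivity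
  have hPsiSum := psi_sum_zero G lam Psi hlam hPsi
  have hPhiSum := psi_sum_zero H mu Phi hmu hPhi
  have hPsiComp := psi_complete hn Psi hPsiOrth hPsiSum
  have hPhiComp := psi_complete hm Phi hPhiOrth hPhiSum
  have hGspec := lapm_spectral hn G lam Psi hlam hPsi hPsiOrth
  have hHspec := lapm_spectral hm H mu Phi hmu hPhi hPhiOrth
  set w : (Fin (n-1) ⊕ (Fin (m-1) ⊕ Unit)) → (Fin n ⊕ Fin m) → ℝ :=
    Sum.elim (fun k => Sum.elim (Psi k) 0)
      (Sum.elim (fun k => Sum.elim 0 (Phi k))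
        (fun _ => Sum.elim (fun _ => (m:ℝ)) (fun _ => -(n:ℝ)))) with hwdef
  set g : (Fin (n-1) ⊕ (Fin (m-1) ⊕ Unit)) → ℝ :=
    Sum.elim (fun _ => 1) (Sum.elim (fun _ => 1) (fun _ => (n:ℝ)*m*((n:ℝ)+m))) with hgdef
  set c : (Fin (n-1) ⊕ (Fin (m-1) ⊕ Unit)) → ℝ :=
    Sum.elim (fun k => lam k + m) (Sum.elim (fun k => mu k + n)
      (fun _ => ((n:ℝ)*m)⁻¹)) with hcdef
  have hdotsum : ∀ (f f' : Fin n → ℝ) (p p' : Fin m → ℝ),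
      (Sum.elim f p : Fin n ⊕ Fin m → ℝ) ⬝ᵥ Sum.elim f' p' = f ⬝ᵥ f' + p ⬝ᵥ p' := by
    intros f f' p p'
    simp [dotProduct, Fintype.sum_sum_type]
  have horth : ∀ t t', w t ⬝ᵥ w t' = if t = t' then g t else 0 := by
    rintro (k | k | u) (k' | k' | u') <;>
      simp only [hwdef, hgdef, Sum.elim_inl, Sum.elim_inr, hdotsum]
    · rw [hPsiOrth k k']
      simp only [zero_dotProduct, add_zero, Sum.inl.injEq]
    · simp
    · rw [if_neg (by simp), zero_dotProduct, add_zero]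
      simp only [dotProduct]
      rw [← Finset.sum_mul, hPsiSum k, zero_mul]
    · simp
    · rw [hPhiOrth k k']
      simp only [zero_dotProduct, zero_add, Sum.inr.injEq, Sum.inl.injEq]
    · rw [if_neg (by simp), zero_dotProduct, zero_add]
      simp only [dotProduct]
      rw [← Finset.sum_mul, hPhiSum k, zero_mul]
    · rw [if_neg (by simp), dotProduct_zero, add_zero]
      simp only [dotProduct]
      rw [← Finset.mul_sum, hPsiSum k', mul_zero]
    · rw [if_neg (by simp), dotProduct_zero, zero_add]
      simp only [dotProduct]
      rw [← Finset.mul_sum, hPhiSum k', mul_zero]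
    · rw [if_pos trivial]
      simp only [dotProduct, Finset.sum_const, card_univ, Fintype.card_fin, nsmul_eq_mul]
      push_cast
      ring
  have hgne : ∀ t, g t ≠ 0 := by
    rintro (k | k | u) <;> simp only [hgdef, Sum.elim_inl, Sum.elim_inr]
    · exact one_ne_zero
    · exact one_ne_zero
    · positivity
  have hcne : ∀ t, c t ≠ 0 := by
    rintro (k | k | u) <;> simp only [hcdef, Sum.elim_inl, Sum.elim_inr]
    · have := hlam k; positivity
    · have := hmu k; positivity
    · positivity
  have hL : lapm (graphJoin G H) = ∑ t, c t • vecMulVec (w t) (w t) := by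
    ext i j
    rw [Matrix.sum_apply]
    have hterm : ∀ t, (c t • vecMulVec (w t) (w t)) i j = c t * (w t i * w t j) := fun t => by
      simp [vecMulVec_apply]
    rw [Finset.sum_congr rfl fun t _ => hterm t]
    rw [Fintype.sum_sum_type, Fintype.sum_sum_type]
    rcases i with a | p <;> rcases j with b | q
    · rw [lapm_join_ll]
      simp only [hwdef, hcdef, Sum.elim_inl, Sum.elim_inr, Pi.zero_apply]
      rw [hGspec a b]
      have h1 : ∑ k : Fin (n-1), (lam k + (m:ℝ)) * (Psi k a * Psi k b)
          = (∑ k : Fin (n-1), lam k * (Psi k a * Psi k b))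
            + m * ∑ k : Fin (n-1), Psi k a * Psi k b := by
        rw [Finset.mul_sum, ← Finset.sum_add_distrib]
        exact Finset.sum_congr rfl fun k _ => by ring
      rw [h1, hPsiComp a b]
      simp only [mul_zero, zero_mul, Finset.sum_const_zero, add_zero,
        Finset.univ_unique, Finset.sum_singleton]
      split <;> field_simp <;> ring
    · rw [lapm_join_lr]
      simp only [hwdef, hcdef, Sum.elim_inl, Sum.elim_inr, Pi.zero_apply]
      simp only [mul_zero, zero_mul, Finset.sum_const_zero, add_zero, zero_add,
        Finset.univ_unique, Finset.sum_singleton]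
      field_simp
      try ring
    · rw [lapm_join_rl]
      simp only [hwdef, hcdef, Sum.elim_inl, Sum.elim_inr, Pi.zero_apply]
      simp only [mul_zero, zero_mul, Finset.sum_const_zero, add_zero, zero_add,
        Finset.univ_unique, Finset.sum_singleton]
      field_simp
      try ring
    · rw [lapm_join_rr]
      simp only [hwdef, hcdef, Sum.elim_inl, Sum.elim_inr, Pi.zero_apply]
      rw [hHspec p q]
      have h1 : ∑ k : Fin (m-1), (mu k + (n:ℝ)) * (Phi k p * Phi k q)
          = (∑ k : Fin (m-1), mu k * (Phi k p * Phi k q))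
            + n * ∑ k : Fin (m-1), Phi k p * Phi k q := by
        rw [Finset.mul_sum, ← Finset.sum_add_distrib]
        exact Finset.sum_congr rfl fun k _ => by ring
      rw [h1, hPhiComp p q]
      simp only [mul_zero, zero_mul, Finset.sum_const_zero, add_zero, zero_add,
        Finset.univ_unique, Finset.sum_singleton]
      split <;> field_simp <;> ring
  have hinv : (lapm (graphJoin G H)).mpinv
      = ∑ t, (c t * g t ^ 2)⁻¹ • vecMulVec (w t) (w t) := by
    rw [hL]; exact mpinv_sum_smul_vmv w g c horth hgne hcne
  have hkey : ∀ x : (Fin n ⊕ Fin m) → ℝ,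
      x ⬝ᵥ ((lapm (graphJoin G H)).mpinv *ᵥ x)
        = ∑ t, (c t * g t ^ 2)⁻¹ * (w t ⬝ᵥ x)^2 := by
    intro x; rw [hinv, dot_mulVec_sum_vmv]
  constructor
  · intro u v
    simp only [resDist, effRes]
    rw [hkey]
    rw [Fintype.sum_sum_type, Fintype.sum_sum_type]
    have t1 : ∀ k : Fin (n-1), (c (Sum.inl k) * g (Sum.inl k) ^ 2)⁻¹
          * ((w (Sum.inl k)) ⬝ᵥ (Pi.single (Sum.inl u) 1 - Pi.single (Sum.inl v) 1)) ^ 2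
        = (Psi k u - Psi k v)^2 / (lam k + m) := by
      intro k
      rw [dot_single_sub]
      simp only [hwdef, hcdef, hgdef, Sum.elim_inl]
      rw [one_pow, mul_one, ← div_eq_inv_mul]
    have t2 : ∀ k : Fin (m-1), (c (Sum.inr (Sum.inl k)) * g (Sum.inr (Sum.inl k)) ^ 2)⁻¹
          * ((w (Sum.inr (Sum.inl k))) ⬝ᵥ (Pi.single (Sum.inl u) 1 - Pi.single (Sum.inl v) 1)) ^ 2
        = 0 := by
      intro k
      rw [dot_single_sub]
      simp [hwdef, Sum.elim_inl, Sum.elim_inr]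
    have t3 : ∀ y : Unit, (c (Sum.inr (Sum.inr y)) * g (Sum.inr (Sum.inr y)) ^ 2)⁻¹
          * ((w (Sum.inr (Sum.inr y))) ⬝ᵥ (Pi.single (Sum.inl u) 1 - Pi.single (Sum.inl v) 1)) ^ 2
        = 0 := by
      intro y
      rw [dot_single_sub]
      simp [hwdef, Sum.elim_inl, Sum.elim_inr]
    rw [Finset.sum_congr rfl fun k _ => t1 k, Finset.sum_congr rfl fun k _ => t2 k,
      Finset.sum_congr rfl fun y _ => t3 y]
    simp
  · intro u q
    simp only [resDist, effRes]
    rw [hkey]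
    rw [Fintype.sum_sum_type, Fintype.sum_sum_type]
    have t1 : ∀ k : Fin (n-1), (c (Sum.inl k) * g (Sum.inl k) ^ 2)⁻¹
          * ((w (Sum.inl k)) ⬝ᵥ (Pi.single (Sum.inl u) 1 - Pi.single (Sum.inr q) 1)) ^ 2
        = (Psi k u)^2 / (lam k + m) := by
      intro k
      rw [dot_single_sub]
      simp only [hwdef, hcdef, hgdef, Sum.elim_inl, Sum.elim_inr, Pi.zero_apply, sub_zero]
      rw [one_pow, mul_one, ← div_eq_inv_mul]
    have t2 : ∀ k : Fin (m-1), (c (Sum.inr (Sum.inl k)) * g (Sum.inr (Sum.inl k)) ^ 2)⁻¹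
          * ((w (Sum.inr (Sum.inl k))) ⬝ᵥ (Pi.single (Sum.inl u) 1 - Pi.single (Sum.inr q) 1)) ^ 2
        = (Phi k q)^2 / (mu k + n) := by
      intro k
      rw [dot_single_sub]
      simp only [hwdef, hcdef, hgdef, Sum.elim_inl, Sum.elim_inr, Pi.zero_apply, zero_sub]
      rw [one_pow, mul_one, neg_sq, ← div_eq_inv_mul]
    have t3 : ∀ y : Unit, (c (Sum.inr (Sum.inr y)) * g (Sum.inr (Sum.inr y)) ^ 2)⁻¹
          * ((w (Sum.inr (Sum.inr y))) ⬝ᵥ (Pi.single (Sum.inl u) 1 - Pi.single (Sum.inr q) 1)) ^ 2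
        = 1 / ((n:ℝ) * m) := by
      intro y
      rw [dot_single_sub]
      simp only [hwdef, hcdef, hgdef, Sum.elim_inl, Sum.elim_inr]
      rw [sub_neg_eq_add]
      field_simp
      ring
    rw [Finset.sum_congr rfl fun k _ => t1 k, Finset.sum_congr rfl fun k _ => t2 k,
      Finset.sum_congr rfl fun y _ => t3 y]
    simp
    try ring
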